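/- Let r ≥ 2 and let G be a K_{r+1}-free graph on n vertices. If the minimum degree of G is strictly greater than ((3r−4)/(3r−1))·n, then G is r-partite. -/

import Mathlib

open SimpleGraph

/-- The number of edges of a graph. -/
noncomputable def edgeCount {V : Type*} (G : SimpleGraph V) : ℕ := Nat.card G.edgeSet

/-- `t_r(n)`: the number of edges of the Turán graph `T_r(n)`. -/
noncomputable def turanNum (r n : ℕ) : ℕ := edgeCount (turanGraph n r)

/-- `D_r(G)`: the minimum number of edges that must be removed from `G` to make it
`r`-partite (i.e. `r`-colorable). -/
noncomputable def minDel {V : Type*} (r : ℕ) (G : SimpleGraph V) : ℕ :=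
  sInf {k | ∃ H : SimpleGraph V, H ≤ G ∧ H.Colorable r ∧ edgeCount G = edgeCount H + k}

/-- The blowup `G[n₁,…,n_k]` of a graph `G` on `Fin k`. -/
def blowup {k : ℕ} (G : SimpleGraph (Fin k)) (n : Fin k → ℕ) :
    SimpleGraph ((i : Fin k) × Fin (n i)) :=
  SimpleGraph.comap Sigma.fst G

/-- The adjacency relation of the pentagon `v₁v₂v₅v₄v₃` on `{0,…,4}` (0-indexed),
i.e. the edges `v₁v₂, v₂v₅, v₅v₄, v₄v₃, v₃v₁`. -/
def pentAdj (a b : ℕ) : Prop :=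
  (a = 0 ∧ b = 1) ∨ (a = 1 ∧ b = 0) ∨ (a = 1 ∧ b = 4) ∨ (a = 4 ∧ b = 1) ∨
  (a = 4 ∧ b = 3) ∨ (a = 3 ∧ b = 4) ∨ (a = 3 ∧ b = 2) ∨ (a = 2 ∧ b = 3) ∨
  (a = 2 ∧ b = 0) ∨ (a = 0 ∧ b = 2)

lemma pentAdj_symm {a b : ℕ} (h : pentAdj a b) : pentAdj b a := by
  rcases h with ⟨rfl, rfl⟩|⟨rfl, rfl⟩|⟨rfl, rfl⟩|⟨rfl, rfl⟩|⟨rfl, rfl⟩|⟨rfl, rfl⟩|⟨rfl, rfl⟩|⟨rfl, rfl⟩|⟨rfl, rfl⟩|⟨rfl, rfl⟩ <;> simp [pentAdj]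

/-- The graph `L_r` on `r+3` vertices: the first five vertices induce the pentagon
`v₁v₂v₅v₄v₃`, and all other pairs of distinct vertices are adjacent. -/
def Lgraph (r : ℕ) : SimpleGraph (Fin (r + 3)) where
  Adj a b := a ≠ b ∧ (5 ≤ (a : ℕ) ∨ 5 ≤ (b : ℕ) ∨ pentAdj (a : ℕ) (b : ℕ))
  symm := ⟨fun a b h => ⟨h.1.symm, by
    rcases h.2 with h2 | h2 | h2
    · exact Or.inr (Or.inl h2)
    · exact Or.inl h2
    · exact Or.inr (Or.inr (pentAdj_symm h2))⟩⟩
  loopless := ⟨fun a h => h.1 rfl⟩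

/-- The sequence of part sizes `x, y, y, nn 0, nn 1, …` for a blowup of `L_r`. -/
def pentSizes (x y : ℕ) (nn : ℕ → ℕ) : ℕ → ℕ
  | 0 => x
  | 1 => y
  | 2 => y
  | m + 3 => nn m

/-- The pentagon blowup `L_r[x, y, y, nn 0, …, nn (r-1)]`. -/
def pentagonBlowup (r x y : ℕ) (nn : ℕ → ℕ) :
    SimpleGraph ((i : Fin (r + 3)) × Fin (pentSizes x y nn i.val)) :=
  blowup (Lgraph r) (fun i => pentSizes x y nn i.val)


open Finset


section AESproof

variable {V : Type} [Fintype V] [DecidableEq V]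

/-- Wheel structure for the Andrásfai–Erdős–Sós proof. -/
def AESWheel (H : SimpleGraph V) (r : ℕ) (v w₁ w₂ : V) (s t : Finset V) : Prop :=
  v ∉ s ∧ w₁ ∉ s ∧ v ∉ t ∧ w₂ ∉ t ∧
  H.IsNClique r (insert v s) ∧ H.IsNClique r (insert w₁ s) ∧
  H.IsNClique r (insert v t) ∧ H.IsNClique r (insert w₂ t)

variable {H : SimpleGraph V} {r : ℕ}

lemma AES_colorable_of_no_p3 (hfree : H.CliqueFree (r + 1))
    (h : ∀ v w₁ w₂ : V, H.Adj w₁ w₂ → ¬H.Adj v w₁ → ¬H.Adj v w₂ → v = w₁ ∨ v = w₂) :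
    H.Colorable r := by
  classical
  have hsymm : ∀ {x y : V}, (x = y ∨ ¬H.Adj x y) → (y = x ∨ ¬H.Adj y x) := by
    rintro x y (rfl | hxy)
    · exact Or.inl rfl
    · exact Or.inr fun hh => hxy hh.symm
  have htrans : ∀ {x y z : V}, (x = y ∨ ¬H.Adj x y) → (y = z ∨ ¬H.Adj y z) →
      (x = z ∨ ¬H.Adj x z) := by
    rintro x y z h1 h2
    rcases h1 with rfl | h1
    · exact h2
    rcases h2 with rfl | h2
    · exact Or.inr h1
    right
    intro hxz
    rcases h y x z hxz (fun hh => h1 hh.symm) h2 with rfl | rfl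
    · exact h2 hxz
    · exact h1 hxz
  let st : Setoid V := ⟨fun x y => x = y ∨ ¬H.Adj x y,
    ⟨fun _ => Or.inl rfl, hsymm, htrans⟩⟩
  haveI : DecidableRel st.r := fun _ _ => Classical.dec _
  have hcard : Fintype.card (Quotient st) ≤ r := by
    by_contra hc
    push_neg at hc
    have hle : Fintype.card (Fin (r + 1)) ≤ Fintype.card (Quotient st) := by
      simpa using hc
    obtain ⟨f⟩ := Function.Embedding.nonempty_of_card_le hle
    have hinj : Function.Injective (fun i : Fin (r + 1) => (f i).out) := by
      intro i j hij
      exact f.injective (Quotient.out_injective hij)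
    have hclique : H.IsNClique (r + 1)
        ((univ : Finset (Fin (r + 1))).image (fun i => (f i).out)) := by
      constructor
      · intro a ha b hb hab
        obtain ⟨i, _, rfl⟩ := Finset.mem_image.1 (Finset.mem_coe.1 ha)
        obtain ⟨j, _, rfl⟩ := Finset.mem_image.1 (Finset.mem_coe.1 hb)
        by_contra hn
        have : (f i) = (f j) := by
          rw [← Quotient.out_eq (f i), ← Quotient.out_eq (f j)]
          exact Quotient.sound (Or.inr hn)
        exact hab (by rw [this])
      · rw [Finset.card_image_of_injective _ hinj]
        simp
    exact hfree _ hclique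
  have C : H.Coloring (Quotient st) := Coloring.mk (fun x => ⟦x⟧) (by
    intro a b hab heq
    have hr : st.r a b := Quotient.eq.mp heq
    rcases hr with rfl | hn
    · exact H.loopless.irrefl _ hab
    · exact hn hab)
  exact C.colorable.mono hcard

lemma AES_exists_clique
    (hmax : Maximal (fun K : SimpleGraph V => K.CliqueFree (r + 1)) H)
    {v w : V} (hne : v ≠ w) (hna : ¬H.Adj v w) :
    ∃ s : Finset V, v ∉ s ∧ w ∉ s ∧ H.IsNClique r (insert v s) ∧
      H.IsNClique r (insert w s) := by
  have hnf : ¬(H ⊔ edge v w).CliqueFree (r + 1) := by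
    intro hcf
    have hle : H ⊔ edge v w ≤ H := hmax.2 hcf le_sup_left
    exact hna (hle ((sup_adj _ _ _ _).mpr (Or.inr ((edge_adj _ _ _ _).mpr ⟨Or.inl ⟨rfl, rfl⟩, hne⟩))))
  rw [CliqueFree] at hnf
  push_neg at hnf
  obtain ⟨T, hT⟩ := hnf
  have hpair : ∀ {x y : V}, x ∈ T → y ∈ T → x ≠ y → ¬H.Adj x y →
      (x = v ∧ y = w) ∨ (x = w ∧ y = v) := by
    intro x y hx hy hne' hnadj
    have hadj := hT.1 (Finset.mem_coe.2 hx) (Finset.mem_coe.2 hy) hne'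
    rcases (sup_adj _ _ _ _).1 hadj with hh | hh
    · exact absurd hh hnadj
    · exact ((edge_adj _ _ _ _).1 hh).1
  have hvT : v ∈ T := by
    by_contra hv
    refine hmax.1 T ⟨?_, hT.2⟩
    intro x hx y hy hxy
    rcases (sup_adj _ _ _ _).1 (hT.1 hx hy hxy) with hh | hh
    · exact hh
    · rcases ((edge_adj _ _ _ _).1 hh).1 with ⟨rfl, rfl⟩ | ⟨rfl, rfl⟩
      · exact absurd (Finset.mem_coe.1 hx) hv
      · exact absurd (Finset.mem_coe.1 hy) hv
  have hwT : w ∈ T := by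
    by_contra hw
    refine hmax.1 T ⟨?_, hT.2⟩
    intro x hx y hy hxy
    rcases (sup_adj _ _ _ _).1 (hT.1 hx hy hxy) with hh | hh
    · exact hh
    · rcases ((edge_adj _ _ _ _).1 hh).1 with ⟨rfl, rfl⟩ | ⟨rfl, rfl⟩
      · exact absurd (Finset.mem_coe.1 hy) hw
      · exact absurd (Finset.mem_coe.1 hx) hw
  have hcomm : (T.erase v).erase w = (T.erase w).erase v := by
    ext z; simp only [Finset.mem_erase]; tauto
  have hclique_erase : ∀ {u u' : V}, u ∈ T → u' ∈ T → u ≠ u' → ({u, u'} : Set V) = {v, w} →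
      H.IsNClique r (T.erase u') := by
    intro u u' hu hu' huu' hset
    constructor
    · intro x hx y hy hxy
      have hx' := Finset.mem_erase.1 (Finset.mem_coe.1 hx)
      have hy' := Finset.mem_erase.1 (Finset.mem_coe.1 hy)
      by_contra hn
      have hu'vw : u' = v ∨ u' = w := by
        have : u' ∈ ({u, u'} : Set V) := by simp
        rw [hset] at this; simpa using this
      rcases hpair hx'.2 hy'.2 hxy hn with ⟨hxv, hyw⟩ | ⟨hxw, hyv⟩
      · rcases hu'vw with h' | h'
        · exact hx'.1 (hxv.trans h'.symm)
        · exact hy'.1 (hyw.trans h'.symm)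
      · rcases hu'vw with h' | h'
        · exact hy'.1 (hyv.trans h'.symm)
        · exact hx'.1 (hxw.trans h'.symm)
    · rw [Finset.card_erase_of_mem hu', hT.2]
      omega
  refine ⟨(T.erase v).erase w, fun h => (Finset.notMem_erase v T) (Finset.mem_of_mem_erase h),
    by simp, ?_, ?_⟩
  · rw [hcomm, Finset.insert_erase (Finset.mem_erase.mpr ⟨hne, hvT⟩)]
    exact hclique_erase hvT hwT hne rfl
  · rw [Finset.insert_erase (Finset.mem_erase.mpr ⟨hne.symm, hwT⟩)]
    exact hclique_erase hwT hvT hne.symm (by ext z; simp; tauto)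

lemma AES_exists_nonadj (hfree : H.CliqueFree (r + 1)) {c : V} {s : Finset V}
    (hc : H.IsNClique r (insert c s)) (x : V) :
    ∃ a ∈ insert c s, ¬H.Adj x a := by
  by_contra h
  push_neg at h
  exact hfree _ (hc.insert h)

lemma AES_clique_swap {c a x : V} {s : Finset V}
    (hc : H.IsNClique r (insert c s)) (hcs : c ∉ s) (ha : a ∈ s) (hxc : H.Adj x c)
    (hadj : ∀ z ∈ s.erase a, H.Adj x z) (hxs : x ∉ s.erase a) :
    H.IsNClique r (insert c (insert x (s.erase a))) := by
  have h1 : H.IsClique (insert c (s.erase a) : Finset V) := by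
    apply hc.1.subset
    intro z hz
    rcases Finset.mem_insert.1 (Finset.mem_coe.1 hz) with rfl | hz'
    · exact Finset.mem_coe.2 (Finset.mem_insert_self _ _)
    · exact Finset.mem_coe.2 (Finset.mem_insert_of_mem (Finset.mem_of_mem_erase hz'))
  have h2 : H.IsClique (insert x (insert c (s.erase a)) : Finset V) := by
    rw [Finset.coe_insert]
    apply h1.insert
    intro b hb hne
    rcases Finset.mem_insert.1 (Finset.mem_coe.1 hb) with rfl | hb'
    · exact hxc
    · exact hadj _ hb'
  have hxca : x ∉ insert c (s.erase a) := by
    intro hx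
    rcases Finset.mem_insert.1 hx with rfl | hx'
    · exact H.loopless.irrefl _ hxc
    · exact hxs hx'
  constructor
  · rw [Finset.insert_comm] at h2
    exact h2
  · rw [Finset.insert_comm, Finset.card_insert_of_notMem hxca,
      Finset.card_insert_of_notMem (fun hcsa => hcs (Finset.mem_of_mem_erase hcsa)),
      Finset.card_erase_of_mem ha]
    have hs1 : s.card + 1 = r := by
      rw [← Finset.card_insert_of_notMem hcs, hc.2]
    have hs2 : 1 ≤ s.card := Finset.card_pos.mpr ⟨a, ha⟩
    omega

lemma AES_k_le (hfree : H.CliqueFree (r + 1)) {v w₁ w₂ : V} {s t : Finset V}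
    (hw : H.Adj w₁ w₂) (hW : AESWheel H r v w₁ w₂ s t) :
    (s ∩ t).card + 2 ≤ r := by
  obtain ⟨hvs, hw1s, hvt, hw2t, hcvs, hcw1s, hcvt, hcw2t⟩ := hW
  have hscard : s.card + 1 = r := by
    rw [← Finset.card_insert_of_notMem hvs, hcvs.2]
  have htcard : t.card + 1 = r := by
    rw [← Finset.card_insert_of_notMem hvt, hcvt.2]
  have hst : s ≠ t := by
    rintro rfl
    have hw1ins : w₁ ∉ insert w₂ s := by
      intro hh
      rcases Finset.mem_insert.1 hh with rfl | hh'
      · exact H.loopless.irrefl _ hw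
      · exact hw1s hh'
    have h1 : H.IsNClique (r + 1) (insert w₁ (insert w₂ s)) := by
      apply hcw2t.insert
      intro b hb
      rcases Finset.mem_insert.1 hb with rfl | hb'
      · exact hw
      · exact hcw1s.1 (Finset.mem_coe.2 (Finset.mem_insert_self _ _))
          (Finset.mem_coe.2 (Finset.mem_insert_of_mem hb'))
          (fun hh => hw1s (hh ▸ hb'))
    exact hfree _ h1
  have hsub : s ∩ t ⊆ s := Finset.inter_subset_left
  have hne' : s ∩ t ≠ s := by
    intro h
    have hsubt : s ⊆ t := fun y hy => (Finset.mem_inter.1 (h ▸ hy)).2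
    exact hst (Finset.eq_of_subset_of_card_le hsubt (by omega))
  have hlt : (s ∩ t).card < s.card := by
    refine lt_of_le_of_ne (Finset.card_le_card hsub) (fun hc => hne' ?_)
    exact Finset.eq_of_subset_of_card_le hsub (le_of_eq hc.symm)
  omega

set_option maxHeartbeats 1000000 in
lemma AES_heart [DecidableRel H.Adj] (hfree : H.CliqueFree (r + 1))
    {v w₁ w₂ : V} {s t : Finset V}
    (hw : H.Adj w₁ w₂) (hv1 : ¬H.Adj v w₁) (hv2 : ¬H.Adj v w₂)
    (hne1 : v ≠ w₁) (hne2 : v ≠ w₂)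
    (hW : AESWheel H r v w₁ w₂ s t)
    (hmaxk : ∀ s' t', AESWheel H r v w₁ w₂ s' t' → (s' ∩ t').card ≤ (s ∩ t).card)
    (x : V) :
    3 ≤ ((insert v (insert w₁ (insert w₂ (s ∪ t)))).filter (fun z => ¬H.Adj x z)).card
      + 2 * ((s ∩ t).filter (fun z => ¬H.Adj x z)).card := by
  obtain ⟨hvs, hw1s, hvt, hw2t, hcvs, hcw1s, hcvt, hcw2t⟩ := hW
  set X := insert v (insert w₁ (insert w₂ (s ∪ t))) with hXdef
  have hw1w2 : w₁ ≠ w₂ := hw.ne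
  have hw1t : w₁ ∉ t := fun h => hv1 (hcvt.1 (Finset.mem_coe.2 (Finset.mem_insert_self _ _))
    (Finset.mem_coe.2 (Finset.mem_insert_of_mem h)) hne1)
  have hw2s : w₂ ∉ s := fun h => hv2 (hcvs.1 (Finset.mem_coe.2 (Finset.mem_insert_self _ _))
    (Finset.mem_coe.2 (Finset.mem_insert_of_mem h)) hne2)
  have hsX : ∀ y ∈ s, y ∈ X := fun y hy => by
    simp only [hXdef, Finset.mem_insert, Finset.mem_union]; tauto
  have htX : ∀ y ∈ t, y ∈ X := fun y hy => by
    simp only [hXdef, Finset.mem_insert, Finset.mem_union]; tauto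
  have hvX : v ∈ X := Finset.mem_insert_self _ _
  have hw1X : w₁ ∈ X := by simp [hXdef]
  have hw2X : w₂ ∈ X := by simp [hXdef]
  set F := X.filter (fun z => ¬H.Adj x z) with hFdef
  have hmemF : ∀ y, y ∈ X → ¬H.Adj x y → y ∈ F := fun y hy hn =>
    Finset.mem_filter.mpr ⟨hy, hn⟩
  by_cases hA : ∀ z ∈ s ∩ t, H.Adj x z
  · have hfilter0 : ((s ∩ t).filter (fun z => ¬H.Adj x z)) = ∅ := by
      rw [Finset.filter_eq_empty_iff]; intro z hz; exact not_not_intro (hA z hz)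
    rw [hfilter0]
    simp only [Finset.card_empty, Nat.mul_zero, Nat.add_zero]
    by_contra hF
    push_neg at hF
    have hFcard : F.card ≤ 2 := by omega
    obtain ⟨a₁, ha₁m, ha₁⟩ := AES_exists_nonadj hfree hcvs x
    obtain ⟨a₂, ha₂m, ha₂⟩ := AES_exists_nonadj hfree hcw1s x
    obtain ⟨a₃, ha₃m, ha₃⟩ := AES_exists_nonadj hfree hcvt x
    obtain ⟨a₄, ha₄m, ha₄⟩ := AES_exists_nonadj hfree hcw2t x
    have hnotst : ∀ y, ¬H.Adj x y → ¬(y ∈ s ∧ y ∈ t) := fun y hn hy =>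
      hn (hA y (Finset.mem_inter.mpr hy))
    by_cases hxv : H.Adj x v
    · -- a₁ ∈ s \ t, a₃ ∈ t \ s
      have ha₁s : a₁ ∈ s := by
        rcases Finset.mem_insert.1 ha₁m with rfl | h
        · exact absurd hxv ha₁
        · exact h
      have ha₁t : a₁ ∉ t := fun h => hnotst a₁ ha₁ ⟨ha₁s, h⟩
      have ha₃t : a₃ ∈ t := by
        rcases Finset.mem_insert.1 ha₃m with rfl | h
        · exact absurd hxv ha₃
        · exact h
      have ha₃s : a₃ ∉ s := fun h => hnotst a₃ ha₃ ⟨h, ha₃t⟩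
      have hab : a₁ ≠ a₃ := fun h => ha₃s (h ▸ ha₁s)
      have ha₁F : a₁ ∈ F := hmemF _ (hsX _ ha₁s) ha₁
      have ha₃F : a₃ ∈ F := hmemF _ (htX _ ha₃t) ha₃
      by_cases hxw₁ : H.Adj x w₁
      · by_cases hxw₂ : H.Adj x w₂
        · -- main case : improve the wheel
          have hsub' : ({a₁, a₃} : Finset V) ⊆ F := by
            intro y hy
            rcases Finset.mem_insert.1 hy with rfl | hy'
            · exact ha₁F
            · rw [Finset.mem_singleton.1 hy']; exact ha₃F
          have hFeq : F = {a₁, a₃} :=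
            (Finset.eq_of_subset_of_card_le hsub'
              (by rw [Finset.card_pair hab]; exact hFcard)).symm
          have hadjall : ∀ z ∈ X, z ≠ a₁ → z ≠ a₃ → H.Adj x z := by
            intro z hz h1 h2
            by_contra hn
            have hzF : z ∈ F := hmemF z hz hn
            rw [hFeq] at hzF
            rcases Finset.mem_insert.1 hzF with rfl | hzF'
            · exact h1 rfl
            · exact h2 (Finset.mem_singleton.1 hzF')
          have hxs : x ∉ s.erase a₁ := by
            intro h
            have hxs' : x ∈ s := Finset.mem_of_mem_erase h
            exact H.loopless.irrefl x (hadjall x (hsX _ hxs') (Finset.ne_of_mem_erase h)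
              (fun hh => ha₃s (hh ▸ hxs')))
          have hxt : x ∉ t.erase a₃ := by
            intro h
            have hxt' : x ∈ t := Finset.mem_of_mem_erase h
            exact H.loopless.irrefl x (hadjall x (htX _ hxt')
              (fun hh => ha₁t (hh ▸ hxt')) (Finset.ne_of_mem_erase h))
          have hadj_s : ∀ z ∈ s.erase a₁, H.Adj x z := fun z hz =>
            hadjall z (hsX _ (Finset.mem_of_mem_erase hz)) (Finset.ne_of_mem_erase hz)
              (fun h => ha₃s (h ▸ Finset.mem_of_mem_erase hz))
          have hadj_t : ∀ z ∈ t.erase a₃, H.Adj x z := fun z hz =>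
            hadjall z (htX _ (Finset.mem_of_mem_erase hz))
              (fun h => ha₁t (h ▸ Finset.mem_of_mem_erase hz)) (Finset.ne_of_mem_erase hz)
          have hW' : AESWheel H r v w₁ w₂ (insert x (s.erase a₁)) (insert x (t.erase a₃)) := by
            refine ⟨?_, ?_, ?_, ?_, ?_, ?_, ?_, ?_⟩
            · intro h
              rcases Finset.mem_insert.1 h with h' | h'
              · exact hxv.ne' h'
              · exact hvs (Finset.mem_of_mem_erase h')
            · intro h
              rcases Finset.mem_insert.1 h with h' | h'
              · exact hxw₁.ne' h'
              · exact hw1s (Finset.mem_of_mem_erase h')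
            · intro h
              rcases Finset.mem_insert.1 h with h' | h'
              · exact hxv.ne' h'
              · exact hvt (Finset.mem_of_mem_erase h')
            · intro h
              rcases Finset.mem_insert.1 h with h' | h'
              · exact hxw₂.ne' h'
              · exact hw2t (Finset.mem_of_mem_erase h')
            · exact AES_clique_swap hcvs hvs ha₁s hxv hadj_s hxs
            · exact AES_clique_swap hcw1s hw1s ha₁s hxw₁ hadj_s hxs
            · exact AES_clique_swap hcvt hvt ha₃t hxv hadj_t hxt
            · exact AES_clique_swap hcw2t hw2t ha₃t hxw₂ hadj_t hxt
          have hck := hmaxk _ _ hW'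
          have hxst : x ∉ s ∩ t := fun h => H.loopless.irrefl x (hA x h)
          have hsub : insert x (s ∩ t) ⊆ (insert x (s.erase a₁)) ∩ (insert x (t.erase a₃)) := by
            intro y hy
            rcases Finset.mem_insert.1 hy with rfl | hy'
            · exact Finset.mem_inter.mpr ⟨Finset.mem_insert_self _ _, Finset.mem_insert_self _ _⟩
            · have h1 := Finset.mem_inter.1 hy'
              exact Finset.mem_inter.mpr
                ⟨Finset.mem_insert_of_mem (Finset.mem_erase.mpr ⟨fun h => ha₁t (h ▸ h1.2), h1.1⟩),
                 Finset.mem_insert_of_mem (Finset.mem_erase.mpr ⟨fun h => ha₃s (h ▸ h1.1), h1.2⟩)⟩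
          have hcard := Finset.card_le_card hsub
          rw [Finset.card_insert_of_notMem hxst] at hcard
          omega
        · -- ¬ Adj x w₂
          have hsub3 : ({w₂, a₁, a₃} : Finset V) ⊆ F := by
            intro y hy
            rcases Finset.mem_insert.1 hy with rfl | hy'
            · exact hmemF _ hw2X hxw₂
            · rcases Finset.mem_insert.1 hy' with rfl | hy''
              · exact ha₁F
              · rw [Finset.mem_singleton.1 hy'']; exact ha₃F
          have hc3 : ({w₂, a₁, a₃} : Finset V).card = 3 := by
            rw [Finset.card_insert_of_notMem, Finset.card_pair hab]
            intro h
            rcases Finset.mem_insert.1 h with h' | h'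
            · exact hw2s (h' ▸ ha₁s)
            · exact hw2t ((Finset.mem_singleton.1 h') ▸ ha₃t)
          have := Finset.card_le_card hsub3
          omega
      · -- ¬ Adj x w₁
        have hsub3 : ({w₁, a₁, a₃} : Finset V) ⊆ F := by
          intro y hy
          rcases Finset.mem_insert.1 hy with rfl | hy'
          · exact hmemF _ hw1X hxw₁
          · rcases Finset.mem_insert.1 hy' with rfl | hy''
            · exact ha₁F
            · rw [Finset.mem_singleton.1 hy'']; exact ha₃F
        have hc3 : ({w₁, a₁, a₃} : Finset V).card = 3 := by
          rw [Finset.card_insert_of_notMem, Finset.card_pair hab]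
          intro h
          rcases Finset.mem_insert.1 h with h' | h'
          · exact hw1s (h' ▸ ha₁s)
          · exact hw1t ((Finset.mem_singleton.1 h') ▸ ha₃t)
        have := Finset.card_le_card hsub3
        omega
    · -- ¬ Adj x v : {v, a₂, a₄} ⊆ F
      have ha₂w : a₂ ∈ insert w₁ s := ha₂m
      have ha₄w : a₄ ∈ insert w₂ t := ha₄m
      have ha₂X : a₂ ∈ X := by
        rcases Finset.mem_insert.1 ha₂m with rfl | h
        · exact hw1X
        · exact hsX _ h
      have ha₄X : a₄ ∈ X := by
        rcases Finset.mem_insert.1 ha₄m with rfl | h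
        · exact hw2X
        · exact htX _ h
      have hva₂ : v ≠ a₂ := by
        intro h
        rcases Finset.mem_insert.1 ha₂m with h' | h'
        · exact hne1 (h.trans h')
        · exact hvs (h ▸ h')
      have hva₄ : v ≠ a₄ := by
        intro h
        rcases Finset.mem_insert.1 ha₄m with h' | h'
        · exact hne2 (h.trans h')
        · exact hvt (h ▸ h')
      have ha₂a₄ : a₂ ≠ a₄ := by
        intro h
        rcases Finset.mem_insert.1 ha₂m with h2 | h2 <;>
          rcases Finset.mem_insert.1 ha₄m with h4 | h4
        · exact hw1w2 (by rw [← h2, h, h4])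
        · exact hw1t (by rw [← h2, h]; exact h4)
        · exact hw2s (by rw [← h4, ← h]; exact h2)
        · exact hnotst a₂ ha₂ ⟨h2, h ▸ h4⟩
      have hsub3 : ({v, a₂, a₄} : Finset V) ⊆ F := by
        intro y hy
        rcases Finset.mem_insert.1 hy with rfl | hy'
        · exact hmemF _ hvX hxv
        · rcases Finset.mem_insert.1 hy' with rfl | hy''
          · exact hmemF _ ha₂X ha₂
          · rw [Finset.mem_singleton.1 hy'']; exact hmemF _ ha₄X ha₄
      have hc3 : ({v, a₂, a₄} : Finset V).card = 3 := by
        rw [Finset.card_insert_of_notMem, Finset.card_pair ha₂a₄]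
        intro h
        rcases Finset.mem_insert.1 h with h' | h'
        · exact hva₂ h'
        · exact hva₄ (Finset.mem_singleton.1 h')
      have := Finset.card_le_card hsub3
      omega
  · push_neg at hA
    obtain ⟨z, hz, hzx⟩ := hA
    have h1 : 1 ≤ ((s ∩ t).filter (fun z => ¬H.Adj x z)).card :=
      Finset.card_pos.mpr ⟨z, Finset.mem_filter.mpr ⟨hz, hzx⟩⟩
    have h2 : 1 ≤ F.card :=
      Finset.card_pos.mpr ⟨z, hmemF _ (hsX _ (Finset.mem_inter.1 hz).1) hzx⟩
    omega

end AESproof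

theorem stmt14' {V : Type} [Fintype V] (r : ℕ) (hr : 2 ≤ r) (G : SimpleGraph V)
    [DecidableRel G.Adj] (hfree : G.CliqueFree (r + 1))
    (hdeg : ∀ v : V, (3 * (r : ℝ) - 4) / (3 * (r : ℝ) - 1) * (Fintype.card V) <
      (G.degree v : ℝ)) :
    G.Colorable r := by
  classical
  obtain ⟨H, hGH, hmax⟩ := Finite.exists_le_maximal (p := fun K : SimpleGraph V => K.CliqueFree (r + 1)) hfree
  haveI : DecidableRel H.Adj := Classical.decRel _
  have hHfree : H.CliqueFree (r + 1) := hmax.1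
  refine Colorable.mono_left hGH ?_
  by_contra hcol
  have hHdeg : ∀ z : V, (3 * (r : ℝ) - 4) / (3 * (r : ℝ) - 1) * (Fintype.card V) <
      (H.degree z : ℝ) := by
    intro z
    refine lt_of_lt_of_le (hdeg z) ?_
    have hsub : G.neighborFinset z ⊆ H.neighborFinset z := by
      intro y hy
      rw [mem_neighborFinset] at hy ⊢
      exact hGH hy
    exact_mod_cast Finset.card_le_card hsub
  obtain ⟨v, w₁, w₂, hw, hv1, hv2, hne1, hne2⟩ :
      ∃ v w₁ w₂ : V, H.Adj w₁ w₂ ∧ ¬H.Adj v w₁ ∧ ¬H.Adj v w₂ ∧ v ≠ w₁ ∧ v ≠ w₂ := by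
    by_contra hno
    push_neg at hno
    refine hcol (AES_colorable_of_no_p3 hHfree ?_)
    intro a b c hbc hab hac
    by_contra hcon
    push_neg at hcon
    exact hcon.2 (hno a b c hbc hab hac hcon.1)
  obtain ⟨s₀, hs₀1, hs₀2, hs₀3, hs₀4⟩ := AES_exists_clique hmax hne1 hv1
  obtain ⟨t₀, ht₀1, ht₀2, ht₀3, ht₀4⟩ := AES_exists_clique hmax hne2 hv2
  have hW₀ : AESWheel H r v w₁ w₂ s₀ t₀ := ⟨hs₀1, hs₀2, ht₀1, ht₀2, hs₀3, hs₀4, ht₀3, ht₀4⟩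
  set WS : Set ℕ := {k | ∃ s t, AESWheel H r v w₁ w₂ s t ∧ (s ∩ t).card = k} with hWSdef
  have hWSne : WS.Nonempty := ⟨_, s₀, t₀, hW₀, rfl⟩
  have hWSbdd : BddAbove WS := by
    refine ⟨Fintype.card V, ?_⟩
    rintro k ⟨s, t, _, rfl⟩
    exact le_trans (Finset.card_le_univ _) (le_of_eq Finset.card_univ)
  obtain ⟨s, t, hW, hkmax⟩ : ∃ s t, AESWheel H r v w₁ w₂ s t ∧ (s ∩ t).card = sSup WS :=
    Nat.sSup_mem hWSne hWSbdd
  have hmaxk : ∀ s' t', AESWheel H r v w₁ w₂ s' t' → (s' ∩ t').card ≤ (s ∩ t).card := by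
    intro s' t' hW'
    rw [hkmax]
    exact le_csSup hWSbdd ⟨s', t', hW', rfl⟩
  set n := Fintype.card V with hn
  set X := insert v (insert w₁ (insert w₂ (s ∪ t))) with hXdef
  have heart := fun x => AES_heart hHfree hw hv1 hv2 hne1 hne2 hW hmaxk x
  have hswap : ∀ Y : Finset V,
      ∑ x : V, (Y.filter (fun z => ¬H.Adj x z)).card
        = ∑ z ∈ Y, (Finset.univ.filter (fun x : V => ¬H.Adj x z)).card := by
    intro Y
    simp_rw [Finset.card_filter]
    exact Finset.sum_comm
  set S₁ := ∑ z ∈ X, (Finset.univ.filter (fun x : V => ¬H.Adj x z)).card with hS₁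
  set S₂ := ∑ z ∈ s ∩ t, (Finset.univ.filter (fun x : V => ¬H.Adj x z)).card with hS₂
  have hmain : 3 * n ≤ S₁ + 2 * S₂ := by
    calc 3 * n = ∑ _x : V, 3 := by
          rw [Finset.sum_const, Finset.card_univ, smul_eq_mul, mul_comm]
    _ ≤ ∑ x : V, ((X.filter (fun z => ¬H.Adj x z)).card
          + 2 * ((s ∩ t).filter (fun z => ¬H.Adj x z)).card) :=
        Finset.sum_le_sum fun x _ => heart x
    _ = S₁ + 2 * S₂ := by
        rw [Finset.sum_add_distrib, hS₁, hS₂, ← hswap X, ← hswap (s ∩ t), ← Finset.mul_sum]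
  -- real arithmetic
  have hr' : (2 : ℝ) ≤ (r : ℝ) := by exact_mod_cast hr
  have h3r : (0 : ℝ) < 3 * (r : ℝ) - 1 := by linarith
  have hzbound : ∀ z : V,
      ((Finset.univ.filter (fun x : V => ¬H.Adj x z)).card : ℝ) < 3 / (3 * (r : ℝ) - 1) * n := by
    intro z
    have hsplit : (Finset.univ.filter (fun x : V => H.Adj x z)).card
        + (Finset.univ.filter (fun x : V => ¬H.Adj x z)).card = n := by
      rw [Finset.card_filter_add_card_filter_not, Finset.card_univ]
    have hdegz : (Finset.univ.filter (fun x : V => H.Adj x z)).card = H.degree z := by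
      rw [degree]
      congr 1
      ext y
      simp [mem_neighborFinset, adj_comm]
    have hbig := hHdeg z
    have hcast : ((Finset.univ.filter (fun x : V => ¬H.Adj x z)).card : ℝ)
        = (n : ℝ) - (H.degree z : ℝ) := by
      rw [← hdegz]
      have := hsplit
      push_cast [← this]
      ring
    rw [hcast]
    have hkey : (n : ℝ) - (3 * (r : ℝ) - 4) / (3 * (r : ℝ) - 1) * n
        = 3 / (3 * (r : ℝ) - 1) * n := by
      field_simp
      ring
    linarith
  have hvX : v ∈ X := Finset.mem_insert_self _ _
  have hsum1 : (S₁ : ℝ) < X.card * (3 / (3 * (r : ℝ) - 1) * n) := by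
    have h1 : (S₁ : ℝ) = ∑ z ∈ X, ((Finset.univ.filter (fun x : V => ¬H.Adj x z)).card : ℝ) := by
      rw [hS₁]
      push_cast
      rfl
    rw [h1]
    have := Finset.sum_lt_sum_of_nonempty ⟨v, hvX⟩
      (f := fun z => ((Finset.univ.filter (fun x : V => ¬H.Adj x z)).card : ℝ))
      (g := fun _ => 3 / (3 * (r : ℝ) - 1) * n) (fun z _ => hzbound z)
    simpa [Finset.sum_const, nsmul_eq_mul] using this
  have hsum2 : (S₂ : ℝ) ≤ (s ∩ t).card * (3 / (3 * (r : ℝ) - 1) * n) := by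
    have h1 : (S₂ : ℝ) = ∑ z ∈ s ∩ t,
        ((Finset.univ.filter (fun x : V => ¬H.Adj x z)).card : ℝ) := by
      rw [hS₂]
      push_cast
      rfl
    rw [h1]
    calc ∑ z ∈ s ∩ t, ((Finset.univ.filter (fun x : V => ¬H.Adj x z)).card : ℝ)
        ≤ ∑ _z ∈ s ∩ t, 3 / (3 * (r : ℝ) - 1) * n :=
          Finset.sum_le_sum fun z _ => le_of_lt (hzbound z)
    _ = (s ∩ t).card * (3 / (3 * (r : ℝ) - 1) * n) := by
          rw [Finset.sum_const, nsmul_eq_mul]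
  -- cardinality bound
  obtain ⟨hvs, hw1s, hvt, hw2t, hcvs, hcw1s, hcvt, hcw2t⟩ := hW
  have hscard : s.card + 1 = r := by
    rw [← Finset.card_insert_of_notMem hvs, hcvs.2]
  have htcard : t.card + 1 = r := by
    rw [← Finset.card_insert_of_notMem hvt, hcvt.2]
  have hk2 : (s ∩ t).card + 2 ≤ r :=
    AES_k_le hHfree hw ⟨hvs, hw1s, hvt, hw2t, hcvs, hcw1s, hcvt, hcw2t⟩
  have hXc1 : X.card ≤ 3 + (s ∪ t).card := by
    have c1 := Finset.card_insert_le v (insert w₁ (insert w₂ (s ∪ t)))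
    have c2 := Finset.card_insert_le w₁ (insert w₂ (s ∪ t))
    have c3 := Finset.card_insert_le w₂ (s ∪ t)
    rw [hXdef]
    omega
  have hunion : (s ∪ t).card + (s ∩ t).card = s.card + t.card :=
    Finset.card_union_add_card_inter s t
  have hXbound : X.card + 2 * (s ∩ t).card + 1 ≤ 3 * r := by omega
  have hXboundR : (X.card : ℝ) + 2 * ((s ∩ t).card : ℝ) ≤ 3 * (r : ℝ) - 1 := by
    have : ((X.card + 2 * (s ∩ t).card + 1 : ℕ) : ℝ) ≤ ((3 * r : ℕ) : ℝ) := by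
      exact_mod_cast hXbound
    push_cast at this
    linarith
  have hc' : (0 : ℝ) ≤ 3 / (3 * (r : ℝ) - 1) * n := by positivity
  have hfinal : ((X.card : ℝ) + 2 * ((s ∩ t).card : ℝ)) * (3 / (3 * (r : ℝ) - 1) * n)
      ≤ (3 * (r : ℝ) - 1) * (3 / (3 * (r : ℝ) - 1) * n) :=
    mul_le_mul_of_nonneg_right hXboundR hc'
  have heq3n : (3 * (r : ℝ) - 1) * (3 / (3 * (r : ℝ) - 1) * n) = 3 * n := by
    field_simp
  have hmainR : 3 * (n : ℝ) ≤ (S₁ : ℝ) + 2 * (S₂ : ℝ) := by exact_mod_cast hmain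
  nlinarith [hsum1, hsum2, hfinal, heq3n, hmainR]


/-- (Andrásfai–Erdős–Sós) For `r ≥ 2`, a `K_{r+1}`-free graph on `n`
vertices whose minimum degree is strictly greater than `((3r-4)/(3r-1))·n` is `r`-partite. -/
theorem stmt14 {V : Type} [Fintype V] (r : ℕ) (hr : 2 ≤ r) (G : SimpleGraph V)
    [DecidableRel G.Adj] (hfree : G.CliqueFree (r + 1))
    (hdeg : ∀ v : V, (3 * (r : ℝ) - 4) / (3 * (r : ℝ) - 1) * (Fintype.card V) <
      (G.degree v : ℝ)) :
    G.Colorable r := stmt14' r hr G hfree hdeg
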